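/- Let G be a complete graph with non-degenerate measure m satisfying CD(K,∞). Then for any finitely supported f and t ≥ 0, Γ(P_t f) belongs to the form domain D(Q), i.e. ‖Γ(Γ(P_t f))‖_{ℓ¹(V,m)} < ∞. -/

import Mathlib

open scoped BigOperators
open Filter

/-- The carré du champ operator. -/
noncomputable def gam {V : Type*} (m : V → ℝ) (μ : V → V → ℝ) (f g : V → ℝ) (x : V) : ℝ :=
  (1 / (2 * m x)) * ∑' y, μ x y * (f y - f x) * (g y - g x)

/-- The formal graph Laplacian. -/
noncomputable def lap {V : Type*} (m : V → ℝ) (μ : V → V → ℝ) (f : V → ℝ) (x : V) : ℝ :=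
  (1 / m x) * ∑' y, μ x y * (f y - f x)

/-- The Dirichlet energy `Q(f) = (1/2) ∑_{x,y} μ_{xy} (f y - f x)²`. -/
noncomputable def QN {V : Type*} (μ : V → V → ℝ) (f : V → ℝ) : ℝ :=
  (1 / 2) * ∑' p : V × V, μ p.1 p.2 * (f p.2 - f p.1) ^ 2

/-- The `ℓ²(V,m)` norm. -/
noncomputable def l2n {V : Type*} (m : V → ℝ) (f : V → ℝ) : ℝ :=
  Real.sqrt (∑' x, f x ^ 2 * m x)

/-- The iterated carré du champ `Γ₂(f) = (1/2) Δ Γ(f) - Γ(f, Δ f)`. -/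
noncomputable def gam2 {V : Type*} (m : V → ℝ) (μ : V → V → ℝ) (f : V → ℝ) (x : V) : ℝ :=
  (1 / 2) * lap m μ (fun y => gam m μ f f y) x - gam m μ f (lap m μ f) x


section aux

variable {V : Type*} {m : V → ℝ} {μ : V → V → ℝ}

lemma sfs {α : Type*} {f : α → ℝ} (h : (Function.support f).Finite) : Summable f := by
  apply summable_of_ne_finset_zero (s := h.toFinset)
  intro b hb
  by_contra hb'
  exact hb (h.mem_toFinset.mpr hb')

lemma summable_inner (hlf : ∀ x, (Function.support (μ x)).Finite) (x : V) (F : V → ℝ) :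
    Summable (fun y => μ x y * F y) := by
  apply sfs ((hlf x).subset _)
  intro y hy
  simp only [Function.mem_support] at hy ⊢
  intro h0
  exact hy (by rw [h0, zero_mul])

lemma finite_left (hlf : ∀ x, (Function.support (μ x)).Finite) {S : Set V} (hS : S.Finite) :
    {p : V × V | p.1 ∈ S ∧ μ p.1 p.2 ≠ 0}.Finite := by
  have hsub : {p : V × V | p.1 ∈ S ∧ μ p.1 p.2 ≠ 0}
      ⊆ ⋃ x ∈ S, (fun y => (x, y)) '' (Function.support (μ x)) := by
    rintro ⟨x, y⟩ ⟨h1, h2⟩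
    exact Set.mem_biUnion h1 ⟨y, h2, rfl⟩
  exact (Set.Finite.biUnion hS (fun x _ => (hlf x).image _)).subset hsub

lemma finite_right (hsym : ∀ x y, μ x y = μ y x) (hlf : ∀ x, (Function.support (μ x)).Finite)
    {S : Set V} (hS : S.Finite) :
    {p : V × V | p.2 ∈ S ∧ μ p.1 p.2 ≠ 0}.Finite := by
  have h1 := finite_left hlf hS
  have hsub : {p : V × V | p.2 ∈ S ∧ μ p.1 p.2 ≠ 0}
      ⊆ Prod.swap '' {p : V × V | p.1 ∈ S ∧ μ p.1 p.2 ≠ 0} := by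
    rintro ⟨x, y⟩ ⟨hy, hμ⟩
    refine ⟨(y, x), ⟨hy, ?_⟩, rfl⟩
    rw [hsym y x]; exact hμ
  exact (h1.image _).subset hsub

lemma prod_support_fin (hsym : ∀ x y, μ x y = μ y x) (hlf : ∀ x, (Function.support (μ x)).Finite)
    {S : Set V} (hS : S.Finite) (F : V × V → ℝ)
    (h1 : ∀ p : V × V, μ p.1 p.2 = 0 → F p = 0)
    (h2 : ∀ p : V × V, p.1 ∉ S → p.2 ∉ S → F p = 0) :
    (Function.support F).Finite := by
  apply ((finite_left hlf hS).union (finite_right hsym hlf hS)).subset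
  intro p hp
  rw [Function.mem_support] at hp
  by_cases hμ : μ p.1 p.2 = 0
  · exact absurd (h1 p hμ) hp
  by_cases hx : p.1 ∈ S
  · exact Or.inl ⟨hx, hμ⟩
  by_cases hy : p.2 ∈ S
  · exact Or.inr ⟨hy, hμ⟩
  exact absurd (h2 p hx hy) hp

lemma tsum_swap (F : V × V → ℝ) : ∑' p : V × V, F p = ∑' p : V × V, F (p.2, p.1) := by
  rw [← (Equiv.prodComm V V).tsum_eq F]
  exact tsum_congr fun p => rfl

lemma tsum_prod_eq (F : V × V → ℝ) (hF : (Function.support F).Finite)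
    (hfib : ∀ x, Summable fun y => F (x, y)) :
    ∑' p : V × V, F p = ∑' x, ∑' y, F (x, y) := Summable.tsum_prod' (sfs hF) hfib

lemma gam_nonneg (hm : ∀ x, 0 < m x) (hnn : ∀ x y, 0 ≤ μ x y) (f : V → ℝ) (x : V) :
    0 ≤ gam m μ f f x := by
  unfold gam
  apply mul_nonneg (one_div_nonneg.mpr (by linarith [hm x]))
  apply tsum_nonneg
  intro y
  nlinarith [hnn x y, sq_nonneg (f y - f x)]

lemma sum_eq_gam (hm : ∀ x, 0 < m x) (f g : V → ℝ) (x : V) :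
    ∑' y, μ x y * ((f y - f x) * (g y - g x)) = 2 * m x * gam m μ f g x := by
  have h1 : ∑' y, μ x y * ((f y - f x) * (g y - g x))
      = ∑' y, μ x y * (f y - f x) * (g y - g x) := tsum_congr fun y => by ring
  rw [h1]
  unfold gam
  have hne : (2 * m x) ≠ 0 := by have := hm x; positivity
  field_simp
  rw [mul_div_cancel_right₀ _ (hm x).ne']

lemma lap_eq (hm : ∀ x, 0 < m x) (g : V → ℝ) (x : V) :
    ∑' y, μ x y * (g y - g x) = m x * lap m μ g x := by
  unfold lap
  have hne : m x ≠ 0 := (hm x).ne'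
  field_simp

lemma neg_two_gam_le (hm : ∀ x, 0 < m x) (hnn : ∀ x y, 0 ≤ μ x y)
    (hlf : ∀ x, (Function.support (μ x)).Finite) (a b : V → ℝ) (x : V) :
    -(2 * gam m μ a b x) ≤ gam m μ a a x + gam m μ b b x := by
  have key : ∑' y, μ x y * (-2 * ((a y - a x) * (b y - b x)))
      ≤ ∑' y, μ x y * ((a y - a x) * (a y - a x) + (b y - b x) * (b y - b x)) := by
    apply Summable.tsum_le_tsum _ (summable_inner hlf x _) (summable_inner hlf x _)
    intro y
    nlinarith [hnn x y, sq_nonneg ((a y - a x) + (b y - b x))]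
  have h1 : ∑' y, μ x y * (-2 * ((a y - a x) * (b y - b x)))
      = -2 * (2 * m x * gam m μ a b x) := by
    rw [← sum_eq_gam hm a b x, ← tsum_mul_left]
    exact tsum_congr fun y => by ring
  have h2 : ∑' y, μ x y * ((a y - a x) * (a y - a x) + (b y - b x) * (b y - b x))
      = 2 * m x * gam m μ a a x + 2 * m x * gam m μ b b x := by
    rw [← sum_eq_gam hm a a x, ← sum_eq_gam hm b b x, ← Summable.tsum_add (summable_inner hlf x _) (summable_inner hlf x _)]
    exact tsum_congr fun y => by ring
  rw [h1, h2] at key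
  have hmx := hm x
  nlinarith [key]

end aux

section core

variable {V : Type*} {m : V → ℝ} {μ : V → V → ℝ}

lemma green (hm : ∀ x, 0 < m x) (hsym : ∀ x y, μ x y = μ y x)
    (hlf : ∀ x, (Function.support (μ x)).Finite)
    (g ζ : V → ℝ) (hζ : (Function.support ζ).Finite) :
    ∑' p : V × V, μ p.1 p.2 * (g p.2 - g p.1) * (ζ p.2 - ζ p.1)
      = -2 * ∑' x, ζ x * lap m μ g x * m x := by
  set F1 : V × V → ℝ := fun p => μ p.1 p.2 * ((g p.2 - g p.1) * ζ p.2) with hF1def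
  set F2 : V × V → ℝ := fun p => μ p.1 p.2 * ((g p.2 - g p.1) * ζ p.1) with hF2def
  have hF1fin : (Function.support F1).Finite := by
    apply prod_support_fin hsym hlf hζ
    · intro p hp; simp [hF1def, hp]
    · intro p _ hp2
      have : ζ p.2 = 0 := Function.notMem_support.mp hp2
      simp [hF1def, this]
  have hF2fin : (Function.support F2).Finite := by
    apply prod_support_fin hsym hlf hζ
    · intro p hp; simp [hF2def, hp]
    · intro p hp1 _
      have : ζ p.1 = 0 := Function.notMem_support.mp hp1
      simp [hF2def, this]
  have hsplit : ∑' p : V × V, μ p.1 p.2 * (g p.2 - g p.1) * (ζ p.2 - ζ p.1)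
      = ∑' p, F1 p - ∑' p, F2 p := by
    rw [← Summable.tsum_sub (sfs hF1fin) (sfs hF2fin)]
    exact tsum_congr fun p => by simp only [hF1def, hF2def]; ring
  have hswap : ∑' p, F1 p = -∑' p, F2 p := by
    rw [tsum_swap F1, ← tsum_neg]
    apply tsum_congr
    intro p
    simp only [hF1def, hF2def]
    rw [hsym p.2 p.1]
    ring
  have hF2val : ∑' p, F2 p = ∑' x, ζ x * lap m μ g x * m x := by
    rw [tsum_prod_eq F2 hF2fin (fun x => summable_inner hlf x _)]
    apply tsum_congr
    intro x
    have h1 : ∑' y, F2 (x, y) = ζ x * ∑' y, μ x y * (g y - g x) := by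
      rw [← tsum_mul_left]
      exact tsum_congr fun y => by simp only [hF2def]; ring
    rw [h1, lap_eq hm g x]
    ring
  rw [hsplit, hswap, hF2val]
  ring

/-- Core Caccioppoli estimate with a single cut-off. -/
lemma core (hm : ∀ x, 0 < m x) (hsym : ∀ x y, μ x y = μ y x)
    (hnn : ∀ x y, 0 ≤ μ x y) (hlf : ∀ x, (Function.support (μ x)).Finite)
    (h : V → ℝ) (hhfin : (Function.support h).Finite)
    (δ : ℝ) (hδ : 0 ≤ δ) (hhgam : ∀ x, gam m μ h h x ≤ δ)
    (g : V → ℝ) (hg2 : Summable (fun x => g x ^ 2 * m x))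
    (c : ℝ) (hc : ∑' x, (h x) ^ 2 * g x * (-lap m μ g x) * m x ≤ c) :
    ∑' x, (h x) ^ 2 * gam m μ g g x * m x ≤ 2 * c + 4 * (δ * ∑' x, g x ^ 2 * m x) := by
  set P1 : V × V → ℝ := fun p => μ p.1 p.2 * ((g p.2 - g p.1) ^ 2 * (h p.1) ^ 2) with hP1def
  set P1' : V × V → ℝ := fun p => μ p.1 p.2 * ((g p.2 - g p.1) ^ 2 * (h p.2) ^ 2) with hP1'def
  set P2 : V × V → ℝ :=
    fun p => μ p.1 p.2 * ((g p.2 - g p.1) * g p.2 * ((h p.2) ^ 2 - (h p.1) ^ 2)) with hP2def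
  set E1 : V × V → ℝ := fun p => μ p.1 p.2 * ((g p.2) ^ 2 * (h p.2 - h p.1) ^ 2) with hE1def
  set E2 : V × V → ℝ := fun p => μ p.1 p.2 * ((g p.1) ^ 2 * (h p.2 - h p.1) ^ 2) with hE2def
  have hP1fin : (Function.support P1).Finite := by
    apply prod_support_fin hsym hlf hhfin
    · intro p hp; simp [hP1def, hp]
    · intro p hp1 _
      have : h p.1 = 0 := Function.notMem_support.mp hp1
      simp [hP1def, this]
  have hP1'fin : (Function.support P1').Finite := by
    apply prod_support_fin hsym hlf hhfin
    · intro p hp; simp [hP1'def, hp]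
    · intro p _ hp2
      have : h p.2 = 0 := Function.notMem_support.mp hp2
      simp [hP1'def, this]
  have hP2fin : (Function.support P2).Finite := by
    apply prod_support_fin hsym hlf hhfin
    · intro p hp; simp [hP2def, hp]
    · intro p hp1 hp2
      have h1 : h p.1 = 0 := Function.notMem_support.mp hp1
      have h2 : h p.2 = 0 := Function.notMem_support.mp hp2
      simp [hP2def, h1, h2]
  have hE1fin : (Function.support E1).Finite := by
    apply prod_support_fin hsym hlf hhfin
    · intro p hp; simp [hE1def, hp]
    · intro p hp1 hp2
      have h1 : h p.1 = 0 := Function.notMem_support.mp hp1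
      have h2 : h p.2 = 0 := Function.notMem_support.mp hp2
      simp [hE1def, h1, h2]
  have hE2fin : (Function.support E2).Finite := by
    apply prod_support_fin hsym hlf hhfin
    · intro p hp; simp [hE2def, hp]
    · intro p hp1 hp2
      have h1 : h p.1 = 0 := Function.notMem_support.mp hp1
      have h2 : h p.2 = 0 := Function.notMem_support.mp hp2
      simp [hE2def, h1, h2]
  -- A identity : ∑' P1 = 2 * X
  have hA : ∑' p, P1 p = 2 * ∑' x, (h x) ^ 2 * gam m μ g g x * m x := by
    rw [tsum_prod_eq P1 hP1fin (fun x => summable_inner hlf x _), ← tsum_mul_left]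
    apply tsum_congr
    intro x
    have e1 : ∑' y, P1 (x, y) = (h x) ^ 2 * ∑' y, μ x y * ((g y - g x) * (g y - g x)) := by
      rw [← tsum_mul_left]
      exact tsum_congr fun y => by simp only [hP1def]; ring
    rw [e1, sum_eq_gam hm g g x]
    ring
  -- Green + splitting
  set ζ : V → ℝ := fun x => (h x) ^ 2 * g x with hζdef
  have hζfin : (Function.support ζ).Finite := by
    apply hhfin.subset
    intro x hx
    simp only [Function.mem_support, hζdef] at hx ⊢
    intro h0; exact hx (by rw [h0]; ring)
  have hgreen := green hm hsym hlf g ζ hζfin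
  have hsplit : ∑' p : V × V, μ p.1 p.2 * (g p.2 - g p.1) * (ζ p.2 - ζ p.1)
      = ∑' p, P1 p + ∑' p, P2 p := by
    rw [← Summable.tsum_add (sfs hP1fin) (sfs hP2fin)]
    exact tsum_congr fun p => by simp only [hP1def, hP2def, hζdef]; ring
  have hH : -2 * ∑' x, ζ x * lap m μ g x * m x
      = 2 * ∑' x, (h x) ^ 2 * g x * (-lap m μ g x) * m x := by
    have : ∑' x, (h x) ^ 2 * g x * (-lap m μ g x) * m x
        = -∑' x, ζ x * lap m μ g x * m x := by
      rw [← tsum_neg]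
      exact tsum_congr fun x => by simp only [hζdef]; ring
    rw [this]; ring
  -- majorant bound for -∑' P2
  have hmaj : -∑' p, P2 p
      ≤ (1/4) * ∑' p, P1' p + (1/4) * ∑' p, P1 p + 2 * ∑' p, E1 p := by
    have hsMaj : Summable (fun p => (1/4) * P1' p + ((1/4) * P1 p + 2 * E1 p)) :=
      ((sfs hP1'fin).mul_left _).add (((sfs hP1fin).mul_left _).add ((sfs hE1fin).mul_left _))
    have hle : ∑' p, (-P2 p) ≤ ∑' p, ((1/4) * P1' p + ((1/4) * P1 p + 2 * E1 p)) := by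
      apply Summable.tsum_le_tsum _ (sfs hP2fin).neg hsMaj
      intro p
      simp only [hP1def, hP1'def, hP2def, hE1def]
      nlinarith [mul_nonneg (hnn p.1 p.2) (sq_nonneg ((g p.2 - g p.1) * h p.1 / 2 + g p.2 * (h p.2 - h p.1))),
        mul_nonneg (hnn p.1 p.2) (sq_nonneg ((g p.2 - g p.1) * h p.2 / 2 + g p.2 * (h p.2 - h p.1)))]
    rw [tsum_neg] at hle
    calc -∑' p, P2 p ≤ ∑' p, ((1/4) * P1' p + ((1/4) * P1 p + 2 * E1 p)) := hle
      _ = (1/4) * ∑' p, P1' p + ((1/4) * ∑' p, P1 p + 2 * ∑' p, E1 p) := by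
          rw [Summable.tsum_add ((sfs hP1'fin).mul_left _) (((sfs hP1fin).mul_left _).add ((sfs hE1fin).mul_left _)),
            Summable.tsum_add ((sfs hP1fin).mul_left _) ((sfs hE1fin).mul_left _),
            tsum_mul_left, tsum_mul_left, tsum_mul_left]
      _ = _ := by ring
  -- symmetry: ∑' P1' = ∑' P1
  have hP1'eq : ∑' p, P1' p = ∑' p, P1 p := by
    rw [tsum_swap P1']
    apply tsum_congr
    intro p
    simp only [hP1def, hP1'def]
    rw [hsym p.2 p.1]
    ring
  -- E bound
  have hE1eq : ∑' p, E1 p = ∑' p, E2 p := by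
    rw [tsum_swap E1]
    apply tsum_congr
    intro p
    simp only [hE1def, hE2def]
    rw [hsym p.2 p.1]
    ring
  have hE2le : ∑' p, E2 p ≤ 2 * (δ * ∑' x, g x ^ 2 * m x) := by
    have hval : ∑' p, E2 p = ∑' x, (g x) ^ 2 * (2 * m x * gam m μ h h x) := by
      rw [tsum_prod_eq E2 hE2fin (fun x => summable_inner hlf x _)]
      apply tsum_congr
      intro x
      have e1 : ∑' y, E2 (x, y) = (g x) ^ 2 * ∑' y, μ x y * ((h y - h x) * (h y - h x)) := by
        rw [← tsum_mul_left]
        exact tsum_congr fun y => by simp only [hE2def]; ring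
      rw [e1, sum_eq_gam hm h h x]
    rw [hval]
    have hterm : ∀ x, (g x) ^ 2 * (2 * m x * gam m μ h h x) ≤ 2 * (δ * (g x ^ 2 * m x)) := by
      intro x
      have h1 : (2 * (g x) ^ 2 * m x) * gam m μ h h x ≤ (2 * (g x) ^ 2 * m x) * δ := by
        apply mul_le_mul_of_nonneg_left (hhgam x)
        have := hm x; positivity
      nlinarith [h1]
    have hsum2 : Summable fun x => 2 * (δ * (g x ^ 2 * m x)) := by
      simpa using (hg2.mul_left (2 * δ)).congr (fun x => by ring)
    calc ∑' x, (g x) ^ 2 * (2 * m x * gam m μ h h x)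
        ≤ ∑' x, 2 * (δ * (g x ^ 2 * m x)) := by
          apply Summable.tsum_le_tsum hterm _ hsum2
          apply Summable.of_nonneg_of_le _ hterm hsum2
          intro x
          have h1 := gam_nonneg hm hnn h x
          have h2 := (hm x).le
          positivity
      _ = 2 * (δ * ∑' x, g x ^ 2 * m x) := by
          rw [← tsum_mul_left, ← tsum_mul_left]
  -- assemble
  set X := ∑' x, (h x) ^ 2 * gam m μ g g x * m x with hXdef
  have hmain : 2 * X + ∑' p, P2 p = 2 * ∑' x, (h x) ^ 2 * g x * (-lap m μ g x) * m x := by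
    rw [← hA, ← hsplit, hgreen, hH]
  have hE1le : ∑' p, E1 p ≤ 2 * (δ * ∑' x, g x ^ 2 * m x) := hE1eq ▸ hE2le
  have hXformula : ∑' p, P1 p = 2 * X := hA
  linarith [hmaj, hmain, hc, hP1'eq, hE1le, hXformula]

end core

section core2

variable {V : Type*} {m : V → ℝ} {μ : V → V → ℝ}

/-- Family version: uniform control along the cut-offs gives `Γ(g) ∈ ℓ¹(m)`. -/
lemma core2 (hm : ∀ x, 0 < m x) (hsym : ∀ x y, μ x y = μ y x)
    (hnn : ∀ x y, 0 ≤ μ x y) (hlf : ∀ x, (Function.support (μ x)).Finite)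
    (χ : ℕ → V → ℝ) (hfin : ∀ k, (Function.support (χ k)).Finite)
    (hγ : ∀ k x, 1 ≤ k → gam m μ (χ k) (χ k) x ≤ 1 / (k : ℝ))
    (hlim : ∀ x, Tendsto (fun k => χ k x) atTop (nhds 1))
    (g : V → ℝ) (hg2 : Summable (fun x => g x ^ 2 * m x))
    (c : ℝ) (hc : ∀ k : ℕ, 1 ≤ k → ∑' x, (χ k x) ^ 2 * g x * (-lap m μ g x) * m x ≤ c) :
    Summable (fun x => gam m μ g g x * m x) := by
  set T := ∑' x, g x ^ 2 * m x with hTdef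
  have hT0 : 0 ≤ T := tsum_nonneg fun x => by have := (hm x).le; positivity
  have key : ∀ k : ℕ, 1 ≤ k → ∑' x, (χ k x) ^ 2 * gam m μ g g x * m x ≤ 2 * c + 4 * T := by
    intro k hk
    have hk' : (1 : ℝ) ≤ (k : ℝ) := by exact_mod_cast hk
    have hδ : (0:ℝ) ≤ 1 / (k : ℝ) := by positivity
    have := core hm hsym hnn hlf (χ k) (hfin k) (1 / (k : ℝ)) hδ
      (fun x => hγ k x hk) g hg2 c (hc k hk)
    have hfrac : (1 / (k : ℝ)) * T ≤ T := by
      have h1 : (1 / (k : ℝ)) ≤ 1 := by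
        rw [div_le_one (by linarith)]; exact hk'
      nlinarith
    linarith
  apply summable_of_sum_le
  · intro x
    have h1 := gam_nonneg hm hnn g x
    have h2 := (hm x).le
    positivity
  · intro u
    have htend : Tendsto (fun k => ∑ x ∈ u, (χ k x) ^ 2 * gam m μ g g x * m x) atTop
        (nhds (∑ x ∈ u, gam m μ g g x * m x)) := by
      apply tendsto_finset_sum
      intro x _
      have h1 : Tendsto (fun k => (χ k x) ^ 2) atTop (nhds 1) := by
        have := (hlim x).mul (hlim x)
        simpa [pow_two] using this
      have := h1.mul_const (gam m μ g g x * m x)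
      simpa [mul_assoc] using this
    apply le_of_tendsto htend
    filter_upwards [eventually_ge_atTop 1] with k hk
    have hsum : Summable fun x => (χ k x) ^ 2 * gam m μ g g x * m x := by
      apply sfs ((hfin k).subset _)
      intro x hx
      simp only [Function.mem_support] at hx ⊢
      intro h0
      exact hx (by rw [h0]; ring)
    calc ∑ x ∈ u, (χ k x) ^ 2 * gam m μ g g x * m x
        ≤ ∑' x, (χ k x) ^ 2 * gam m μ g g x * m x := by
          apply Summable.sum_le_tsum u _ hsum
          intro x _
          have h1 := gam_nonneg hm hnn g x
          have h2 := (hm x).le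
          positivity
      _ ≤ 2 * c + 4 * T := key k hk

lemma lap_fin_supp (hm : ∀ x, 0 < m x) (hsym : ∀ x y, μ x y = μ y x)
    (hlf : ∀ x, (Function.support (μ x)).Finite)
    (f : V → ℝ) (hf : (Function.support f).Finite) :
    (Function.support (lap m μ f)).Finite := by
  have hbig : (Function.support f ∪ ⋃ y ∈ Function.support f, Function.support (μ y)).Finite :=
    hf.union (Set.Finite.biUnion hf (fun y _ => hlf y))
  apply hbig.subset
  intro x hx
  rw [Function.mem_support] at hx
  by_contra hmem
  rw [Set.mem_union] at hmem
  apply hx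
  have hfx : f x = 0 := by
    by_contra h0
    exact hmem (Or.inl (Function.mem_support.mpr h0))
  have hterm : ∀ y, μ x y * (f y - f x) = 0 := by
    intro y
    by_cases hfy : f y = 0
    · rw [hfy, hfx]; ring
    · have hy : y ∈ Function.support f := Function.mem_support.mpr hfy
      have hμ : μ y x = 0 := by
        by_contra hμ0
        exact hmem (Or.inr (Set.mem_biUnion hy (Function.mem_support.mpr hμ0)))
      rw [hsym x y, hμ, zero_mul]
  unfold lap
  rw [tsum_congr hterm]
  simp

/-- truncation to `[0,∞)` contracts the carré du champ. -/
lemma gam_max_le (hm : ∀ x, 0 < m x) (hnn : ∀ x y, 0 ≤ μ x y)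
    (hlf : ∀ x, (Function.support (μ x)).Finite) (a : V → ℝ) (x : V) :
    gam m μ (fun z => max (a z) 0) (fun z => max (a z) 0) x ≤ gam m μ a a x := by
  unfold gam
  apply mul_le_mul_of_nonneg_left _ (one_div_nonneg.mpr (by linarith [hm x]))
  have h1 : ∀ y, μ x y * (max (a y) 0 - max (a x) 0) * (max (a y) 0 - max (a x) 0)
      ≤ μ x y * ((a y - a x) * (a y - a x)) := by
    intro y
    have habs : |max (a y) 0 - max (a x) 0| ≤ |a y - a x| := abs_max_sub_max_le_abs (a y) (a x) 0
    have hsq : (max (a y) 0 - max (a x) 0) ^ 2 ≤ (a y - a x) ^ 2 := by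
      calc (max (a y) 0 - max (a x) 0) ^ 2 = |max (a y) 0 - max (a x) 0| ^ 2 := (sq_abs _).symm
        _ ≤ |a y - a x| ^ 2 := by gcongr
        _ = (a y - a x) ^ 2 := sq_abs _
    nlinarith [hnn x y]
  have h2 : ∀ y, μ x y * (a y - a x) * (a y - a x) = μ x y * ((a y - a x) * (a y - a x)) :=
    fun y => by ring
  rw [tsum_congr h2]
  apply Summable.tsum_le_tsum h1 _ (summable_inner hlf x _)
  have := summable_inner hlf (F := fun y => ((max (a y) 0 - max (a x) 0) * (max (a y) 0 - max (a x) 0))) x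
  exact this.congr (fun y => by ring)

end core2

lemma sandwich {a W R : ℝ} (h0 : 0 ≤ a) (h1 : a ≤ 1) (hWR : W ≤ R) (hR : 0 ≤ R) :
    a * W ≤ R := by
  nlinarith [mul_le_mul_of_nonneg_left hWR h0, mul_le_mul_of_nonneg_right h1 hR]

theorem stmt13' {V : Type*} (m : V → ℝ) (μ : V → V → ℝ)
    (hm : ∀ x, 0 < m x) (hsym : ∀ x y, μ x y = μ y x)
    (hnn : ∀ x y, 0 ≤ μ x y) (hlf : ∀ x, (Function.support (μ x)).Finite)
    (hnd : 0 < ⨅ x, m x)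
    (η : ℕ → V → ℝ)
    (hηfin : ∀ k, (Function.support (η k)).Finite)
    (hηmono : ∀ k x, η k x ≤ η (k + 1) x)
    (hηlim : ∀ x, Tendsto (fun k => η k x) atTop (nhds 1))
    (hηgam : ∀ k x, 1 ≤ k → gam m μ (η k) (η k) x ≤ 1 / (k : ℝ))
    (P : ℝ → (V → ℝ) → V → ℝ)
    (hPcomm : ∀ f : V → ℝ, (Function.support f).Finite → ∀ t, P t (lap m μ f) = lap m μ (P t f))
    (hPl2 : ∀ f : V → ℝ, Summable (fun x => f x ^ 2 * m x) → ∀ t, 0 ≤ t →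
      Summable (fun x => (P t f x) ^ 2 * m x) ∧ ∑' x, (P t f x) ^ 2 * m x ≤ ∑' x, f x ^ 2 * m x)
    (K : ℝ)
    (hCD : ∀ (f : V → ℝ) (x : V),
      K * gam m μ f f x ≤ (1 / 2) * lap m μ (fun y => gam m μ f f y) x - gam m μ f (lap m μ f) x) :
    ∀ f : V → ℝ, (Function.support f).Finite → ∀ t, 0 ≤ t →
      Summable (fun x => (gam m μ (P t f) (P t f) x) ^ 2 * m x) ∧
      Summable (fun x =>
        gam m μ (fun y => gam m μ (P t f) (P t f) y) (fun y => gam m μ (P t f) (P t f) y) x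
          * m x) := by
  intro f hf t ht
  have hm0le : ∀ x, (⨅ x, m x) ≤ m x := by
    intro x
    exact ciInf_le ⟨0, by rintro y ⟨z, rfl⟩; exact (hm z).le⟩ x
  -- cut-offs
  set χ : ℕ → V → ℝ := fun k x => max (η k x) 0 with hχdef
  have hη1 : ∀ k x, η k x ≤ 1 := fun k x =>
    (monotone_nat_of_le_succ (fun n => hηmono n x)).ge_of_tendsto (hηlim x) k
  have hχ0 : ∀ k x, 0 ≤ χ k x := fun k x => le_max_right _ _
  have hχ1 : ∀ k x, χ k x ≤ 1 := fun k x => max_le (hη1 k x) zero_le_one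
  have hχsq : ∀ k x, (χ k x) ^ 2 ≤ 1 := fun k x => pow_le_one₀ (hχ0 k x) (hχ1 k x)
  have hχfin : ∀ k, (Function.support (χ k)).Finite := by
    intro k
    apply (hηfin k).subset
    intro x hx
    simp only [Function.mem_support, hχdef] at hx ⊢
    intro h0
    apply hx
    rw [h0]
    simp
  have hχγ : ∀ k x, 1 ≤ k → gam m μ (χ k) (χ k) x ≤ 1 / (k : ℝ) := fun k x hk =>
    le_trans (gam_max_le hm hnn hlf (η k) x) (hηgam k x hk)
  have hχlim : ∀ x, Tendsto (fun k => χ k x) atTop (nhds 1) := by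
    intro x
    have h1 : Tendsto (fun k => max (η k x) 0) atTop (nhds (max 1 0)) :=
      (hηlim x).max tendsto_const_nhds
    simpa using h1
  -- support helpers
  have hsubsq : ∀ g : V → ℝ, Function.support (fun x => g x ^ 2 * m x) ⊆ Function.support g := by
    intro g x hx
    simp only [Function.mem_support] at hx ⊢
    intro h0
    apply hx
    rw [h0]
    ring
  -- heat semigroup data
  set u := P t f with hudef
  have hf2 : Summable fun x => f x ^ 2 * m x := sfs (hf.subset (hsubsq f))
  have hu2 : Summable fun x => u x ^ 2 * m x := (hPl2 f hf2 t ht).1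
  have hlapf_fin : (Function.support (lap m μ f)).Finite := lap_fin_supp hm hsym hlf f hf
  have hlapf2 : Summable fun x => (lap m μ f) x ^ 2 * m x := sfs (hlapf_fin.subset (hsubsq _))
  have hlapu_eq : lap m μ u = P t (lap m μ f) := (hPcomm f hf t).symm
  have hDu2 : Summable fun x => (lap m μ u x) ^ 2 * m x := by
    rw [hlapu_eq]
    exact (hPl2 _ hlapf2 t ht).1
  have hDDf_fin : (Function.support (lap m μ (lap m μ f))).Finite :=
    lap_fin_supp hm hsym hlf _ hlapf_fin
  have hDDf2 : Summable fun x => (lap m μ (lap m μ f)) x ^ 2 * m x :=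
    sfs (hDDf_fin.subset (hsubsq _))
  have hDDu_eq : lap m μ (lap m μ u) = P t (lap m μ (lap m μ f)) := by
    rw [hlapu_eq, ← hPcomm (lap m μ f) hlapf_fin t]
  have hDDu2 : Summable fun x => (lap m μ (lap m μ u) x) ^ 2 * m x := by
    rw [hDDu_eq]
    exact (hPl2 _ hDDf2 t ht).1
  -- key ℓ¹ lemma
  have keyL1 : ∀ g : V → ℝ, Summable (fun x => g x ^ 2 * m x) →
      Summable (fun x => (lap m μ g x) ^ 2 * m x) →
      Summable (fun x => gam m μ g g x * m x) := by
    intro g hg2 hLg2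
    apply core2 hm hsym hnn hlf χ hχfin hχγ hχlim g hg2 (∑' x, |g x| * |lap m μ g x| * m x)
    intro k hk
    have hRsum : Summable fun x => |g x| * |lap m μ g x| * m x := by
      apply Summable.of_nonneg_of_le
        (fun x => mul_nonneg (mul_nonneg (abs_nonneg _) (abs_nonneg _)) (hm x).le) _
        ((hg2.mul_left (1/2)).add (hLg2.mul_left (1/2)))
      intro x
      have h1 : |g x| * |lap m μ g x| ≤ 1/2 * g x ^ 2 + 1/2 * (lap m μ g x) ^ 2 := by
        nlinarith [sq_nonneg (|g x| - |lap m μ g x|), sq_abs (g x), sq_abs (lap m μ g x)]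
      nlinarith [(hm x).le, mul_le_mul_of_nonneg_right h1 (hm x).le]
    have hLHSsum : Summable fun x => (χ k x) ^ 2 * g x * (-lap m μ g x) * m x := by
      apply sfs ((hχfin k).subset _)
      intro x hx
      simp only [Function.mem_support] at hx ⊢
      intro h0
      apply hx
      rw [h0]
      ring
    apply Summable.tsum_le_tsum _ hLHSsum hRsum
    intro x
    have hW : g x * (-lap m μ g x) * m x ≤ |g x| * |lap m μ g x| * m x := by
      apply mul_le_mul_of_nonneg_right _ (hm x).le
      calc g x * (-lap m μ g x) ≤ |g x * (-lap m μ g x)| := le_abs_self _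
        _ = |g x| * |lap m μ g x| := by rw [abs_mul, abs_neg]
    have hR0 : 0 ≤ |g x| * |lap m μ g x| * m x :=
      mul_nonneg (mul_nonneg (abs_nonneg _) (abs_nonneg _)) (hm x).le
    calc (χ k x) ^ 2 * g x * (-lap m μ g x) * m x
        = (χ k x) ^ 2 * (g x * (-lap m μ g x) * m x) := by ring
      _ ≤ |g x| * |lap m μ g x| * m x := sandwich (sq_nonneg _) (hχsq k x) hW hR0
  have SG : Summable fun x => gam m μ u u x * m x := keyL1 u hu2 hDu2
  have SD : Summable fun x => gam m μ (lap m μ u) (lap m μ u) x * m x := keyL1 _ hDu2 hDDu2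
  -- pointwise sup bounds
  have hGnn : ∀ x, 0 ≤ gam m μ u u x := gam_nonneg hm hnn u
  have hDnn : ∀ x, 0 ≤ gam m μ (lap m μ u) (lap m μ u) x := gam_nonneg hm hnn _
  set NG := ∑' x, gam m μ u u x * m x with hNGdef
  set ND := ∑' x, gam m μ (lap m μ u) (lap m μ u) x * m x with hNDdef
  have hGsup : ∀ x, gam m μ u u x ≤ NG / (⨅ x, m x) := by
    intro x
    rw [le_div_iff₀ hnd]
    calc gam m μ u u x * (⨅ x, m x) ≤ gam m μ u u x * m x :=
          mul_le_mul_of_nonneg_left (hm0le x) (hGnn x)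
      _ ≤ NG := Summable.le_tsum SG x (fun y _ => mul_nonneg (hGnn y) (hm y).le)
  have hDsup : ∀ x, gam m μ (lap m μ u) (lap m μ u) x ≤ ND / (⨅ x, m x) := by
    intro x
    rw [le_div_iff₀ hnd]
    calc gam m μ (lap m μ u) (lap m μ u) x * (⨅ x, m x)
        ≤ gam m μ (lap m μ u) (lap m μ u) x * m x :=
          mul_le_mul_of_nonneg_left (hm0le x) (hDnn x)
      _ ≤ ND := Summable.le_tsum SD x (fun y _ => mul_nonneg (hDnn y) (hm y).le)
  -- claim 1
  have claim1 : Summable fun x => (gam m μ u u x) ^ 2 * m x := by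
    apply Summable.of_nonneg_of_le
      (fun x => mul_nonneg (sq_nonneg _) (hm x).le) _ (SG.mul_left (NG / (⨅ x, m x)))
    intro x
    calc (gam m μ u u x) ^ 2 * m x = gam m μ u u x * (gam m μ u u x * m x) := by ring
      _ ≤ (NG / (⨅ x, m x)) * (gam m μ u u x * m x) :=
          mul_le_mul_of_nonneg_right (hGsup x) (mul_nonneg (hGnn x) (hm x).le)
  refine ⟨claim1, ?_⟩
  -- claim 2
  set Y : V → ℝ := fun x => (2 * |K| + 1) * ((gam m μ u u x) ^ 2 * m x)
    + gam m μ (lap m μ u) (lap m μ u) x * (gam m μ u u x * m x) with hYdef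
  have hYsum : Summable Y := by
    apply Summable.add (claim1.mul_left _)
    apply Summable.of_nonneg_of_le
      (fun x => mul_nonneg (hDnn x) (mul_nonneg (hGnn x) (hm x).le)) _
      (SG.mul_left (ND / (⨅ x, m x)))
    intro x
    exact mul_le_mul_of_nonneg_right (hDsup x) (mul_nonneg (hGnn x) (hm x).le)
  have hc2 : ∀ k : ℕ, 1 ≤ k →
      ∑' x, (χ k x) ^ 2 * gam m μ u u x * (-lap m μ (fun y => gam m μ u u y) x) * m x
        ≤ ∑' x, Y x := by
    intro k hk
    have hLHSsum : Summable fun x =>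
        (χ k x) ^ 2 * gam m μ u u x * (-lap m μ (fun y => gam m μ u u y) x) * m x := by
      apply sfs ((hχfin k).subset _)
      intro x hx
      simp only [Function.mem_support] at hx ⊢
      intro h0
      apply hx
      rw [h0]
      ring
    apply Summable.tsum_le_tsum _ hLHSsum hYsum
    intro x
    have hB : -lap m μ (fun y => gam m μ u u y) x
        ≤ 2 * |K| * gam m μ u u x + gam m μ u u x
          + gam m μ (lap m μ u) (lap m μ u) x := by
      have h1 := hCD u x
      have h2 := neg_two_gam_le hm hnn hlf u (lap m μ u) x
      have h3 : -K * gam m μ u u x ≤ |K| * gam m μ u u x :=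
        mul_le_mul_of_nonneg_right (neg_le_abs K) (hGnn x)
      linarith
    have hGm0 : 0 ≤ gam m μ u u x * m x := mul_nonneg (hGnn x) (hm x).le
    have hW : gam m μ u u x * (-lap m μ (fun y => gam m μ u u y) x) * m x ≤ Y x := by
      have h4 := mul_le_mul_of_nonneg_right hB hGm0
      simp only [hYdef]
      nlinarith [h4]
    have hR0 : 0 ≤ Y x := by
      simp only [hYdef]
      have h5 : (0:ℝ) ≤ 2 * |K| + 1 := by positivity
      have h6 : (0:ℝ) ≤ (gam m μ u u x) ^ 2 * m x := mul_nonneg (sq_nonneg _) (hm x).le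
      nlinarith [mul_nonneg (hDnn x) hGm0, mul_nonneg h5 h6]
    calc (χ k x) ^ 2 * gam m μ u u x * (-lap m μ (fun y => gam m μ u u y) x) * m x
        = (χ k x) ^ 2 * (gam m μ u u x * (-lap m μ (fun y => gam m μ u u y) x) * m x) := by
          ring
      _ ≤ Y x := sandwich (sq_nonneg _) (hχsq k x) hW hR0
  exact core2 hm hsym hnn hlf χ hχfin hχγ hχlim (fun y => gam m μ u u y) claim1
    (∑' x, Y x) hc2


/-- On a complete graph with non-degenerate measure satisfying `CD(K,∞)`, for finitely
supported `f` and `t ≥ 0`, `Γ(P_t f)` belongs to the form domain `D(Q)`: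
it is in `ℓ²(V,m)` and `‖Γ(Γ(P_t f))‖_{ℓ¹_m} < ∞`. -/
theorem stmt13 {V : Type*} (m : V → ℝ) (μ : V → V → ℝ)
    (hm : ∀ x, 0 < m x) (hsym : ∀ x y, μ x y = μ y x)
    (hnn : ∀ x y, 0 ≤ μ x y) (hlf : ∀ x, (Function.support (μ x)).Finite)
    (hnd : 0 < ⨅ x, m x)
    -- completeness of the graph: cut-off functions `η_k`
    (η : ℕ → V → ℝ)
    (hηfin : ∀ k, (Function.support (η k)).Finite)
    (hηmono : ∀ k x, η k x ≤ η (k + 1) x)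
    (hηlim : ∀ x, Tendsto (fun k => η k x) atTop (nhds 1))
    (hηgam : ∀ k x, 1 ≤ k → gam m μ (η k) (η k) x ≤ 1 / (k : ℝ))
    -- the heat semigroup `P t = e^{tΔ}` and its standard properties
    (P : ℝ → (V → ℝ) → V → ℝ)
    (hP0 : ∀ f, P 0 f = f)
    (hheat : ∀ (f : V → ℝ) (x : V) (t : ℝ), HasDerivAt (fun s => P s f x) (lap m μ (P t f) x) t)
    (hPcomm : ∀ f : V → ℝ, (Function.support f).Finite → ∀ t, P t (lap m μ f) = lap m μ (P t f))
    (hPl2 : ∀ f : V → ℝ, Summable (fun x => f x ^ 2 * m x) → ∀ t, 0 ≤ t →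
      Summable (fun x => (P t f x) ^ 2 * m x) ∧ ∑' x, (P t f x) ^ 2 * m x ≤ ∑' x, f x ^ 2 * m x)
    (hPsym : ∀ f g : V → ℝ, Summable (fun x => f x ^ 2 * m x) →
      Summable (fun x => g x ^ 2 * m x) → ∀ t, 0 ≤ t →
      ∑' x, P t f x * g x * m x = ∑' x, f x * P t g x * m x)
    (hPpos : ∀ f : V → ℝ, (∀ x, 0 ≤ f x) → ∀ t, 0 ≤ t → ∀ x, 0 ≤ P t f x)
    (K : ℝ) (hCD : ∀ (f : V → ℝ) (x : V), K * gam m μ f f x ≤ gam2 m μ f x) :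
    ∀ f : V → ℝ, (Function.support f).Finite → ∀ t, 0 ≤ t →
      Summable (fun x => (gam m μ (P t f) (P t f) x) ^ 2 * m x) ∧
      Summable (fun x =>
        gam m μ (fun y => gam m μ (P t f) (P t f) y) (fun y => gam m μ (P t f) (P t f) y) x
          * m x) := by
  have hCD' : ∀ (f : V → ℝ) (x : V), K * gam m μ f f x
      ≤ (1 / 2) * lap m μ (fun y => gam m μ f f y) x - gam m μ f (lap m μ f) x := by
    intro g x
    have h := hCD g x
    unfold gam2 at h
    exact h
  exact stmt13' m μ hm hsym hnn hlf hnd η hηfin hηmono hηlim hηgam P hPcomm hPl2 K hCD'
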